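/- Let Λ be a finite set of edge labels and n, k ∈ ℕ. Consider any infinite sequence G₀, G₁, G₂, … of finite directed edge-labelled multigraphs over Λ (say G_i has vertex set Fin(m_i) and edge-count function E_i : Fin(m_i) → Fin(m_i) → Λ → ℕ) such that in every G_i every undirected path has length at most n and E_i(u, v, λ) ≤ k for all u, v, λ (bounded edge multiplicity). Then there exist indices i < j such that G_i is an induced subgraph of G_j, i.e., there is an injective map f : Fin(m_i) → Fin(m_j) with E_i(u, v, λ) = E_j(f(u), f(v), λ) for all vertices u, v and all λ ∈ Λ. -/

import Mathlib

/-- The underlying simple graph of a finite directed edge-labelled multigraph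
given by its edge-count function `E`: two distinct vertices are adjacent iff some
labelled edge connects them in either direction. -/
def underlying {Λ : Type*} {n : ℕ} (E : Fin n → Fin n → Λ → ℕ) : SimpleGraph (Fin n) where
  Adj u v := u ≠ v ∧ ∃ l : Λ, 0 < E u v l ∨ 0 < E v u l
  symm := by
    constructor
    rintro u v ⟨h, l, hl⟩
    exact ⟨h.symm, l, hl.symm⟩
  loopless := by
    constructor
    rintro v ⟨h, -⟩
    exact h rfl


universe u

inductive RT (α : Type u) : Type u
  | node (a : α) (ts : List (RT α)) : RT α

namespace RT

variable {α β : Type u}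

def lab : RT α → α
  | node a _ => a

def children : RT α → List (RT α)
  | node _ ts => ts

def labels : RT α → List α
  | node a ts => a :: (ts.attach.map (fun x => labels x.1)).flatten
  decreasing_by have := List.sizeOf_lt_of_mem x.2; simp only [RT.node.sizeOf_spec]; omega

def depth : RT α → ℕ
  | node _ ts => (ts.attach.map (fun x => depth x.1)).foldr max 0 + 1
  decreasing_by have := List.sizeOf_lt_of_mem x.2; simp only [RT.node.sizeOf_spec]; omega

lemma labels_node (a : α) (ts : List (RT α)) :
    labels (node a ts) = a :: (ts.map labels).flatten := by
  rw [labels]; congr 1; rw [← List.attach_map_val (l := ts) (f := labels)]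

lemma depth_node (a : α) (ts : List (RT α)) :
    depth (node a ts) = (ts.map depth).foldr max 0 + 1 := by
  rw [depth]; congr 1; rw [← List.attach_map_val (l := ts) (f := depth)]

lemma one_le_depth (t : RT α) : 1 ≤ t.depth := by
  cases t with
  | node a ts => rw [depth_node]; omega

lemma depth_lt_of_mem {t : RT α} {ts : List (RT α)} {a : α} (h : t ∈ ts) :
    t.depth < (node a ts).depth := by
  rw [depth_node]
  have : t.depth ≤ (ts.map depth).foldr max 0 := by
    induction ts with
    | nil => simp at h
    | cons s ss ih =>
      rcases List.mem_cons.1 h with rfl | h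
      · simp [le_max_iff]
      · simp only [List.map_cons, List.foldr_cons, le_max_iff]
        exact Or.inr (ih h)
  omega

inductive Emb (r : α → α → Prop) : RT α → RT α → Prop
  | node {a b : α} {ts us : List (RT α)} :
      r a b → List.SublistForall₂ (Emb r) ts us → Emb r (node a ts) (node b us)

end RT

namespace RT
variable {α : Type u} {r : α → α → Prop}

lemma sublistForall₂_nil_right {l : List (RT α)} (h : List.SublistForall₂ (Emb r) l []) :
    l = [] := by cases h; rfl

lemma emb_refl_aux [IsRefl α r] : ∀ (d : ℕ) (t : RT α), t.depth ≤ d → Emb r t t := by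
  intro d
  induction d with
  | zero => intro t ht; have := one_le_depth t; omega
  | succ d ih =>
    intro t ht
    cases t with
    | node a ts =>
      refine Emb.node (refl a) ?_
      rw [List.sublistForall₂_iff]
      refine ⟨ts, ?_, List.Sublist.refl ts⟩
      rw [List.forall₂_same]
      intro x hx
      have := depth_lt_of_mem (a := a) hx
      exact ih x (by omega)

lemma emb_refl [IsRefl α r] (t : RT α) : Emb r t t := emb_refl_aux t.depth t le_rfl

lemma sublistForall₂_trans_aux
    (ihl : List (RT α))
    (ih : ∀ t ∈ ihl, ∀ u v, Emb r t u → Emb r u v → Emb r t v) :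
    ∀ {l₂ l₃ : List (RT α)}, List.SublistForall₂ (Emb r) l₂ l₃ →
    ∀ {l₁ : List (RT α)}, (∀ t ∈ l₁, t ∈ ihl) → List.SublistForall₂ (Emb r) l₁ l₂ →
      List.SublistForall₂ (Emb r) l₁ l₃ := by
  intro l₂ l₃ h₂
  induction h₂ with
  | nil =>
    intro l₁ hl₁ h₁
    rw [sublistForall₂_nil_right h₁]
    exact List.SublistForall₂.nil
  | @cons a₂ a₃ l₂' l₃' hE hS ihS =>
    intro l₁ hl₁ h₁
    cases h₁ with
    | nil => exact List.SublistForall₂.nil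
    | @cons a₁ _ l₁' _ hE1 hS1 =>
      exact List.SublistForall₂.cons
        (ih a₁ (hl₁ a₁ (List.mem_cons_self)) _ _ hE1 hE)
        (ihS (fun t ht => hl₁ t (List.mem_cons_of_mem _ ht)) hS1)
    | cons_right hS1 =>
      exact List.SublistForall₂.cons_right (ihS hl₁ hS1)
  | @cons_right a l₂' l₃' hS ihS =>
    intro l₁ hl₁ h₁
    exact List.SublistForall₂.cons_right (ihS hl₁ h₁)

lemma emb_trans_aux [IsTrans α r] : ∀ (d : ℕ) (t : RT α), t.depth ≤ d →
    ∀ u v : RT α, Emb r t u → Emb r u v → Emb r t v := by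
  intro d
  induction d with
  | zero => intro t ht; have := one_le_depth t; omega
  | succ d ih =>
    intro t ht u v htu huv
    cases htu with
    | @node a b ts us hab hsub =>
      cases huv with
      | @node _ c _ vs hbc hsub' =>
        refine Emb.node (IsTrans.trans _ _ _ hab hbc) ?_
        refine sublistForall₂_trans_aux ts ?_ hsub' (fun t ht => ht) hsub
        intro x hx u' v' h1 h2
        have := depth_lt_of_mem (a := a) hx
        exact ih x (by omega) u' v' h1 h2

lemma emb_trans [IsTrans α r] (t u v : RT α) (h1 : Emb r t u) (h2 : Emb r u v) : Emb r t v :=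
  emb_trans_aux t.depth t le_rfl u v h1 h2

instance [IsRefl α r] : IsRefl (RT α) (Emb r) := ⟨emb_refl⟩
instance [IsTrans α r] : IsTrans (RT α) (Emb r) := ⟨fun t u v => emb_trans t u v⟩
instance [IsRefl α r] [IsTrans α r] : IsPreorder (RT α) (Emb r) :=
  { refl := emb_refl, trans := fun t u v => emb_trans t u v }

end RT

namespace RT
variable {α : Type u} {r : α → α → Prop}

lemma lab_mem_labels (t : RT α) : t.lab ∈ t.labels := by
  cases t with
  | node a ts => rw [labels_node]; exact List.mem_cons_self

lemma labels_subset_of_mem_children {t t' : RT α} (h : t' ∈ t.children) :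
    ∀ x ∈ t'.labels, x ∈ t.labels := by
  cases t with
  | node a ts =>
    intro x hx
    rw [labels_node]
    refine List.mem_cons_of_mem _ ?_
    rw [List.mem_flatten]
    exact ⟨t'.labels, List.mem_map_of_mem h, hx⟩

theorem pwo_trees [IsRefl α r] [IsTrans α r] {L : Set α}
    (hL : L.PartiallyWellOrderedOn r) :
    ∀ h : ℕ, {t : RT α | t.depth ≤ h ∧ ∀ a ∈ t.labels, a ∈ L}.PartiallyWellOrderedOn (Emb r) := by
  intro h
  induction h with
  | zero =>
    rw [Set.partiallyWellOrderedOn_iff_exists_lt]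
    intro f hf
    exfalso
    have := one_le_depth (f 0)
    have := (hf 0).1
    omega
  | succ h ih =>
    rw [Set.partiallyWellOrderedOn_iff_exists_lt]
    intro f hf
    haveI : IsPreorder α r := { refl := fun a => refl_of r a, trans := fun _ _ _ => trans_of r }
    obtain ⟨g, hg⟩ := hL.exists_monotone_subseq (f := fun nn => (f nn).lab)
      (fun nn => (hf nn).2 _ (lab_mem_labels _))
    have hHig := Set.PartiallyWellOrderedOn.partiallyWellOrderedOn_sublistForall₂
      (Emb r) ih
    have hmem : ∀ nn : ℕ, (f (g nn)).children ∈
        {l : List (RT α) | ∀ x, x ∈ l → x ∈ {t : RT α | t.depth ≤ h ∧ ∀ a ∈ t.labels, a ∈ L}} := by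
      intro nn x hx
      constructor
      · have hd := depth_lt_of_mem (a := (f (g nn)).lab) (ts := (f (g nn)).children) hx
        have h1 : f (g nn) = node (f (g nn)).lab (f (g nn)).children := by
          cases (f (g nn)); rfl
        rw [← h1] at hd
        have := (hf (g nn)).1
        omega
      · intro a ha
        exact (hf (g nn)).2 a (labels_subset_of_mem_children hx a ha)
    obtain ⟨i, j, hij, hsub⟩ := Set.partiallyWellOrderedOn_iff_exists_lt.1 hHig (fun nn => (f (g nn)).children) hmem
    refine ⟨g i, g j, g.strictMono hij, ?_⟩
    have h1 : f (g i) = node (f (g i)).lab (f (g i)).children := by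
      cases (f (g i)); rfl
    have h2 : f (g j) = node (f (g j)).lab (f (g j)).children := by
      cases (f (g j)); rfl
    rw [h1, h2]
    exact Emb.node (hg i j hij.le) hsub

end RT

namespace RT
variable {α : Type u} {β : Type v}

def keys (κ : α → β) (t : RT α) : List β := t.labels.map κ

inductive Coh (κ : α → β) (γ : α → List β) : RT α → Prop
  | node (a : α) (ts : List (RT α)) :
      (∀ t ∈ ts, γ t.lab = κ a :: γ a) → (∀ t ∈ ts, Coh κ γ t) →
      Coh κ γ (node a ts)

variable {κ : α → β} {γ : α → List β}

lemma mem_labels_node {a : α} {ts : List (RT α)} {p : α} :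
    p ∈ labels (node a ts) ↔ p = a ∨ ∃ t ∈ ts, p ∈ labels t := by
  rw [labels_node]
  simp [List.mem_flatten]

lemma keys_node (a : α) (ts : List (RT α)) :
    keys κ (node a ts) = κ a :: (ts.map (fun t => keys κ t)).flatten := by
  rw [keys, labels_node]
  simp [List.map_flatten, Function.comp_def, keys]

lemma mem_keys_node {a : α} {ts : List (RT α)} {u : β} :
    u ∈ keys κ (node a ts) ↔ u = κ a ∨ ∃ t ∈ ts, u ∈ keys κ t := by
  rw [keys_node]
  simp [List.mem_flatten]

lemma mem_keys_iff {t : RT α} {u : β} :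
    u ∈ keys κ t ↔ ∃ p ∈ t.labels, κ p = u := by
  rw [keys]; simp

lemma mem_keys_of_mem_labels {t : RT α} {p : α} (h : p ∈ t.labels) : κ p ∈ keys κ t :=
  mem_keys_iff.2 ⟨p, h, rfl⟩

lemma mem_labels_cons {a : α} {t : RT α} {ts : List (RT α)} {p : α} :
    p ∈ labels (node a (t :: ts)) ↔ p ∈ t.labels ∨ p ∈ labels (node a ts) := by
  rw [labels_node, labels_node]
  simp only [List.map_cons, List.flatten_cons, List.mem_cons, List.mem_append]
  tauto

lemma mem_keys_cons {a : α} {t : RT α} {ts : List (RT α)} {u : β} :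
    u ∈ keys κ (node a (t :: ts)) ↔ u ∈ keys κ t ∨ u ∈ keys κ (node a ts) := by
  rw [keys_node, keys_node]
  simp only [List.map_cons, List.flatten_cons, List.mem_cons, List.mem_append, keys]
  tauto

lemma chain_decomp : ∀ (d : ℕ) (t : RT α), t.depth ≤ d → Coh κ γ t →
    ∀ p ∈ t.labels, ∃ pre : List β, γ p = pre ++ γ t.lab ∧ ∀ x ∈ pre, x ∈ keys κ t := by
  intro d
  induction d with
  | zero => intro t ht; have := one_le_depth t; omega
  | succ d ih =>
    intro t ht hcoh p hp
    cases t with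
    | node a ts =>
      rcases mem_labels_node.1 hp with rfl | ⟨t', ht', hp'⟩
      · exact ⟨[], by simp [lab], by simp⟩
      · cases hcoh with
        | node _ _ hch hcoh' =>
          have hd := depth_lt_of_mem (a := a) ht'
          obtain ⟨pre, hpre, hmem⟩ := ih t' (by omega) (hcoh' t' ht') p hp'
          refine ⟨pre ++ [κ a], ?_, ?_⟩
          · rw [hpre, hch t' ht']
            simp [lab]
          · intro x hx
            rcases List.mem_append.1 hx with hx | hx
            · have := hmem x hx
              rcases mem_keys_iff.1 this with ⟨q, hq, rfl⟩
              exact mem_keys_of_mem_labels (mem_labels_node.2 (Or.inr ⟨t', ht', hq⟩))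
            · simp only [List.mem_singleton] at hx
              subst hx
              exact mem_keys_node.2 (Or.inl rfl)

lemma chain_decomp' {t : RT α} (hcoh : Coh κ γ t) {p : α} (hp : p ∈ t.labels) :
    ∃ pre : List β, γ p = pre ++ γ t.lab ∧ ∀ x ∈ pre, x ∈ keys κ t :=
  chain_decomp t.depth t le_rfl hcoh p hp

end RT

section Build
variable {V : Type} [DecidableEq V] (G : SimpleGraph V)

open RT

def ExploreOut (s : Finset V) (v : V) (anc : List V) (t : RT (V × List V)) (s' : Finset V) : Prop :=
  s' ⊆ s ∧
  t.lab = (v, anc) ∧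
  RT.Coh Prod.fst Prod.snd t ∧
  (RT.keys Prod.fst t).Nodup ∧
  (∀ u : V, u ∈ RT.keys Prod.fst t ↔ u = v ∨ (u ∈ s ∧ u ∉ s')) ∧
  (∀ p ∈ t.labels, (p.1 :: p.2).Nodup ∧ (p.1 :: p.2).Chain' G.Adj) ∧
  (∀ p ∈ t.labels, ∀ q ∈ t.labels, p.1 ∉ q.1 :: q.2 → q.1 ∉ p.1 :: p.2 → ¬ G.Adj p.1 q.1) ∧
  (∀ u ∈ s', ∀ x ∈ RT.keys Prod.fst t, ¬ G.Adj u x)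

lemma explore_base (s : Finset V) (v : V) (anc : List V)
    (hnd : (v :: anc).Nodup) (hch : (v :: anc).Chain' G.Adj)
    (hnone : ∀ u ∈ s, ¬ G.Adj v u) :
    ExploreOut G s v anc (RT.node (v, anc) []) s := by
  refine ⟨le_refl s, rfl, Coh.node _ _ (by simp) (by simp), ?_, ?_, ?_, ?_, ?_⟩
  · rw [keys_node]; simp
  · intro u
    rw [mem_keys_node]
    simp
  · intro p hp
    rw [mem_labels_node] at hp
    simp only [List.not_mem_nil, false_and, exists_false, or_false] at hp
    subst hp
    exact ⟨hnd, hch⟩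
  · intro p hp q hq hpq hqp
    rw [mem_labels_node] at hp hq
    simp only [List.not_mem_nil, false_and, exists_false, or_false] at hp hq
    subst hp; subst hq
    simp at hpq
  · intro u hu x hx
    rw [mem_keys_node] at hx
    simp only [List.not_mem_nil, false_and, exists_false, or_false] at hx
    subst hx
    intro hadj
    exact hnone u hu (hadj.symm)

lemma explore : ∀ (N : ℕ) (s : Finset V), s.card ≤ N → ∀ (v : V) (anc : List V),
    v ∉ s → (∀ a ∈ anc, a ∉ s) → (v :: anc).Nodup → (v :: anc).Chain' G.Adj →
    ∃ (t : RT (V × List V)) (s' : Finset V), ExploreOut G s v anc t s' := by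
  intro N
  induction N with
  | zero =>
    intro s hcard v anc hv hanc hnd hch
    have hs : s = ∅ := Finset.card_eq_zero.1 (Nat.le_zero.1 hcard)
    subst hs
    exact ⟨_, _, explore_base G ∅ v anc hnd hch (by simp)⟩
  | succ N ih =>
    intro s hcard v anc hv hanc hnd hch
    by_cases hex : ∃ u ∈ s, G.Adj v u
    · obtain ⟨u, hus, hadj⟩ := hex
      -- first recursive call: explore from u
      have hcard1 : (s.erase u).card ≤ N := by
        have := Finset.card_erase_of_mem hus
        omega
      have hunotmem : u ∉ v :: anc := by
        intro hmem
        rcases List.mem_cons.1 hmem with rfl | hmem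
        · exact hv hus
        · exact hanc u hmem hus
      obtain ⟨t₁, s₁, h1sub, h1lab, h1coh, h1nd, h1keys, h1node, h1sep, h1cl⟩ :=
        ih (s.erase u) hcard1 u (v :: anc) (Finset.notMem_erase u s)
          (fun a ha => fun hmem => by
            rcases List.mem_cons.1 ha with rfl | ha'
            · exact hv (Finset.mem_of_mem_erase hmem)
            · exact hanc a ha' (Finset.mem_of_mem_erase hmem))
          (List.nodup_cons.2 ⟨hunotmem, hnd⟩)
          (List.isChain_cons_cons.2 ⟨hadj.symm, hch⟩)
      -- second recursive call: continue exploring from v within s₁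
      have hs₁e : s₁ ⊆ s.erase u := h1sub
      have hs₁s : s₁ ⊆ s := hs₁e.trans (Finset.erase_subset u s)
      have hus₁ : u ∉ s₁ := fun h => Finset.notMem_erase u s (hs₁e h)
      have hcard2 : s₁.card ≤ N := le_trans (Finset.card_le_card hs₁e) hcard1
      obtain ⟨t₂, s', h2sub, h2lab, h2coh, h2nd, h2keys, h2node, h2sep, h2cl⟩ :=
        ih s₁ hcard2 v anc (fun h => hv (hs₁s h)) (fun a ha h => hanc a ha (hs₁s h)) hnd hch
      cases t₂ with
      | node a ts =>
        have ha : a = (v, anc) := h2lab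
        subst ha
        have hs's₁ : s' ⊆ s₁ := h2sub
        have hs's : s' ⊆ s := hs's₁.trans hs₁s
        have hus' : u ∉ s' := fun h => hus₁ (hs's₁ h)
        have hvu : v ≠ u := fun h => hv (h ▸ hus)
        -- characterizations
        have hK1 : ∀ x, x ∈ RT.keys Prod.fst t₁ → x ∈ s ∧ x ∉ s₁ := by
          intro x hx
          rcases (h1keys x).1 hx with rfl | ⟨hx1, hx2⟩
          · exact ⟨hus, hus₁⟩
          · exact ⟨Finset.mem_of_mem_erase hx1, hx2⟩
        have hK2 : ∀ x, x ∈ RT.keys Prod.fst (RT.node (v, anc) ts) → x = v ∨ (x ∈ s₁ ∧ x ∉ s') :=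
          fun x hx => (h2keys x).1 hx
        have hmemkeys : ∀ x, x ∈ RT.keys Prod.fst (RT.node (v, anc) (t₁ :: ts)) ↔
            (x ∈ RT.keys Prod.fst t₁ ∨ x ∈ RT.keys Prod.fst (RT.node (v, anc) ts)) :=
          fun x => mem_keys_cons
        have hmemlabels : ∀ p, p ∈ RT.labels (RT.node (v, anc) (t₁ :: ts)) ↔
            (p ∈ RT.labels t₁ ∨ p ∈ RT.labels (RT.node (v, anc) ts)) :=
          fun p => mem_labels_cons
        have hvnotK1 : v ∉ RT.keys Prod.fst t₁ := fun h => hv (hK1 v h).1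
        -- v in the chain of every label of t₁
        have hvchain : ∀ p ∈ RT.labels t₁, v ∈ p.2 := by
          intro p hp
          obtain ⟨pre, hpre, -⟩ := chain_decomp' h1coh hp
          rw [hpre, h1lab]
          exact List.mem_append.2 (Or.inr (List.mem_cons_self))
        refine ⟨RT.node (v, anc) (t₁ :: ts), s', hs's, rfl, ?_, ?_, ?_, ?_, ?_, ?_⟩
        · -- Coh
          cases h2coh with
          | node _ _ hcc hcoh' =>
            refine Coh.node _ _ ?_ ?_
            · intro t' ht'
              rcases List.mem_cons.1 ht' with rfl | ht'
              · rw [h1lab]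
              · exact hcc t' ht'
            · intro t' ht'
              rcases List.mem_cons.1 ht' with rfl | ht'
              · exact h1coh
              · exact hcoh' t' ht'
        · -- keys Nodup
          rw [keys_node] at h2nd ⊢
          simp only [List.map_cons, List.flatten_cons]
          rw [List.nodup_cons] at h2nd ⊢
          obtain ⟨hvf, hfnd⟩ := h2nd
          have hflat : ∀ x ∈ (List.map (fun t => RT.keys Prod.fst t) ts).flatten,
              x ∈ s₁ ∧ x ∉ s' := by
            intro x hx
            have hx2 : x ∈ RT.keys Prod.fst (RT.node (v, anc) ts) := by
              rw [keys_node]; exact List.mem_cons_of_mem _ hx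
            rcases hK2 x hx2 with rfl | h
            · exact absurd hx hvf
            · exact h
          refine ⟨?_, List.Nodup.append h1nd hfnd ?_⟩
          · intro h
            rcases List.mem_append.1 h with h | h
            · exact hvnotK1 h
            · exact hvf h
          · intro x hx1 hx2
            exact (hK1 x hx1).2 (hflat x hx2).1
        · -- keys characterization
          intro x
          rw [hmemkeys]
          constructor
          · rintro (hx | hx)
            · obtain ⟨hxs, hxns₁⟩ := hK1 x hx
              exact Or.inr ⟨hxs, fun h => hxns₁ (hs's₁ h)⟩
            · rcases hK2 x hx with rfl | ⟨h1, h2⟩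
              · exact Or.inl rfl
              · exact Or.inr ⟨hs₁s h1, h2⟩
          · rintro (rfl | ⟨hxs, hxns'⟩)
            · exact Or.inr ((h2keys x).2 (Or.inl rfl))
            · by_cases hx₁ : x ∈ s₁
              · exact Or.inr ((h2keys x).2 (Or.inr ⟨hx₁, hxns'⟩))
              · left
                by_cases hxu : x = u
                · exact (h1keys x).2 (Or.inl hxu)
                · exact (h1keys x).2 (Or.inr ⟨Finset.mem_erase.2 ⟨hxu, hxs⟩, hx₁⟩)
        · -- node chains are nodup paths
          intro p hp
          rcases (hmemlabels p).1 hp with hp | hp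
          · exact h1node p hp
          · exact h2node p hp
        · -- separation
          intro p hp q hq hpq hqp
          rcases (hmemlabels p).1 hp with hp | hp <;> rcases (hmemlabels q).1 hq with hq | hq
          · exact h1sep p hp q hq hpq hqp
          · -- p ∈ t₁, q ∈ t₂
            by_cases hqv : q.1 = v
            · exact absurd (List.mem_cons_of_mem _ (hqv ▸ hvchain p hp)) hqp
            · have hq1 : q.1 ∈ s₁ := by
                rcases hK2 q.1 (mem_keys_of_mem_labels hq) with h | h
                · exact absurd h hqv
                · exact h.1
              intro hadj'
              exact h1cl q.1 hq1 p.1 (mem_keys_of_mem_labels hp) hadj'.symm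
          · -- p ∈ t₂, q ∈ t₁
            by_cases hpv : p.1 = v
            · exact absurd (List.mem_cons_of_mem _ (hpv ▸ hvchain q hq)) hpq
            · have hp1 : p.1 ∈ s₁ := by
                rcases hK2 p.1 (mem_keys_of_mem_labels hp) with h | h
                · exact absurd h hpv
                · exact h.1
              exact h1cl p.1 hp1 q.1 (mem_keys_of_mem_labels hq)
          · exact h2sep p hp q hq hpq hqp
        · -- closure
          intro u' hu' x hx
          rcases (hmemkeys x).1 hx with hx | hx
          · exact h1cl u' (hs's₁ hu') x hx
          · exact h2cl u' hu' x hx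
    · push_neg at hex
      exact ⟨_, _, explore_base G s v anc hnd hch hex⟩

lemma buildForest : ∀ (N : ℕ) (s : Finset V), s.card ≤ N →
    ∃ F : List (RT (V × List V)),
      (∀ t ∈ F, (RT.lab t).2 = ([] : List V)) ∧
      (∀ t ∈ F, RT.Coh Prod.fst Prod.snd t) ∧
      (F.map (RT.keys Prod.fst)).flatten.Nodup ∧
      (∀ u : V, u ∈ (F.map (RT.keys Prod.fst)).flatten ↔ u ∈ s) ∧
      (∀ t ∈ F, ∀ p ∈ RT.labels t, (p.1 :: p.2).Nodup ∧ (p.1 :: p.2).Chain' G.Adj) ∧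
      (∀ t ∈ F, ∀ t' ∈ F, ∀ p ∈ RT.labels t, ∀ q ∈ RT.labels t',
          p.1 ∉ q.1 :: q.2 → q.1 ∉ p.1 :: p.2 → ¬ G.Adj p.1 q.1) := by
  intro N
  induction N with
  | zero =>
    intro s hcard
    have hs : s = ∅ := Finset.card_eq_zero.1 (Nat.le_zero.1 hcard)
    subst hs
    exact ⟨[], by simp, by simp, by simp, by simp, by simp, by simp⟩
  | succ N ih =>
    intro s hcard
    rcases Finset.eq_empty_or_nonempty s with rfl | ⟨v, hv⟩
    · exact ⟨[], by simp, by simp, by simp, by simp, by simp, by simp⟩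
    · have hcard1 : (s.erase v).card ≤ N := by
        have := Finset.card_erase_of_mem hv
        omega
      obtain ⟨t, s', h1sub, h1lab, h1coh, h1nd, h1keys, h1node, h1sep, h1cl⟩ :=
        explore G N (s.erase v) hcard1 v [] (Finset.notMem_erase v s) (by simp)
          (List.nodup_singleton v) (List.isChain_singleton v)
      have hs's : s' ⊆ s := h1sub.trans (Finset.erase_subset v s)
      have hvs' : v ∉ s' := fun h => Finset.notMem_erase v s (h1sub h)
      have hcard2 : s'.card ≤ N := le_trans (Finset.card_le_card h1sub) hcard1
      obtain ⟨F', h2lab, h2coh, h2nd, h2keys, h2node, h2sep⟩ := ih s' hcard2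
      have hK1 : ∀ x, x ∈ RT.keys Prod.fst t → x ∈ s ∧ x ∉ s' := by
        intro x hx
        rcases (h1keys x).1 hx with rfl | ⟨hx1, hx2⟩
        · exact ⟨hv, hvs'⟩
        · exact ⟨Finset.mem_of_mem_erase hx1, hx2⟩
      have hK2 : ∀ x, x ∈ (F'.map (RT.keys Prod.fst)).flatten → x ∈ s' :=
        fun x hx => (h2keys x).1 hx
      refine ⟨t :: F', ?_, ?_, ?_, ?_, ?_, ?_⟩
      · intro t' ht'
        rcases List.mem_cons.1 ht' with rfl | ht'
        · rw [h1lab]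
        · exact h2lab t' ht'
      · intro t' ht'
        rcases List.mem_cons.1 ht' with rfl | ht'
        · exact h1coh
        · exact h2coh t' ht'
      · simp only [List.map_cons, List.flatten_cons]
        refine List.Nodup.append h1nd h2nd ?_
        intro x hx1 hx2
        exact (hK1 x hx1).2 (hK2 x hx2)
      · intro x
        simp only [List.map_cons, List.flatten_cons, List.mem_append]
        constructor
        · rintro (hx | hx)
          · exact (hK1 x hx).1
          · exact hs's (hK2 x hx)
        · intro hxs
          by_cases hx' : x ∈ s'
          · exact Or.inr ((h2keys x).2 hx')
          · left
            by_cases hxv : x = v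
            · exact (h1keys x).2 (Or.inl hxv)
            · exact (h1keys x).2 (Or.inr ⟨Finset.mem_erase.2 ⟨hxv, hxs⟩, hx'⟩)
      · intro t' ht'
        rcases List.mem_cons.1 ht' with rfl | ht'
        · exact h1node
        · exact h2node t' ht'
      · intro ta hta tb htb p hp q hq hpq hqp
        have hmemF : ∀ (tc : RT (V × List V)), tc ∈ F' → ∀ r ∈ RT.labels tc, r.1 ∈ s' := by
          intro tc htc r hr
          refine hK2 r.1 ?_
          rw [List.mem_flatten]
          exact ⟨RT.keys Prod.fst tc, List.mem_map_of_mem htc, RT.mem_keys_of_mem_labels hr⟩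
        rcases List.mem_cons.1 hta with h1a | h1a
        · rcases List.mem_cons.1 htb with h1b | h1b
          · subst h1a; subst h1b
            exact h1sep p hp q hq hpq hqp
          · subst h1a
            intro hadj'
            exact h1cl q.1 (hmemF tb h1b q hq) p.1 (RT.mem_keys_of_mem_labels hp) hadj'.symm
        · rcases List.mem_cons.1 htb with h1b | h1b
          · subst h1b
            exact h1cl p.1 (hmemF ta h1a p hp) q.1 (RT.mem_keys_of_mem_labels hq)
          · exact h2sep ta h1a tb h1b p hp q hq hpq hqp
end Build

namespace RT
variable {α : Type u} {β : Type v}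

def rmap (f : α → β) : RT α → RT β
  | node a ts => node (f a) (ts.attach.map (fun x => rmap f x.1))
  decreasing_by have := List.sizeOf_lt_of_mem x.2; simp only [RT.node.sizeOf_spec]; omega

lemma rmap_node (f : α → β) (a : α) (ts : List (RT α)) :
    rmap f (node a ts) = node (f a) (ts.map (rmap f)) := by
  rw [rmap]; congr 1; rw [← List.attach_map_val (l := ts) (f := rmap f)]

lemma lab_rmap (f : α → β) (t : RT α) : (rmap f t).lab = f t.lab := by
  cases t with
  | node a ts => rw [rmap_node]; rfl

lemma labels_rmap (f : α → β) : ∀ (d : ℕ) (t : RT α), t.depth ≤ d →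
    (rmap f t).labels = t.labels.map f := by
  intro d
  induction d with
  | zero => intro t ht; have := one_le_depth t; omega
  | succ d ih =>
    intro t ht
    cases t with
    | node a ts =>
      rw [rmap_node, labels_node, labels_node, List.map_cons]
      congr 1
      rw [List.map_flatten, List.map_map, List.map_map]
      congr 1
      apply List.map_congr_left
      intro t' ht'
      have := depth_lt_of_mem (a := a) ht'
      exact ih t' (by omega)

lemma labels_rmap' (f : α → β) (t : RT α) : (rmap f t).labels = t.labels.map f :=
  labels_rmap f t.depth t le_rfl

lemma depth_rmap (f : α → β) : ∀ (d : ℕ) (t : RT α), t.depth ≤ d →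
    (rmap f t).depth = t.depth := by
  intro d
  induction d with
  | zero => intro t ht; have := one_le_depth t; omega
  | succ d ih =>
    intro t ht
    cases t with
    | node a ts =>
      rw [rmap_node, depth_node, depth_node, List.map_map]
      congr 2
      apply List.map_congr_left
      intro t' ht'
      have := depth_lt_of_mem (a := a) ht'
      exact ih t' (by omega)

lemma depth_rmap' (f : α → β) (t : RT α) : (rmap f t).depth = t.depth :=
  depth_rmap f t.depth t le_rfl

lemma keys_rmap {β' : Type w} (f : α → β) (κ : α → β') (κ' : β → β') (hκ : ∀ a, κ' (f a) = κ (a)) (t : RT α) :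
    keys κ' (rmap f t) = keys κ t := by
  rw [keys, keys, labels_rmap', List.map_map]
  apply List.map_congr_left
  intro p _
  exact hκ p

lemma coh_rmap {β' : Type w} (f : α → β) (κ : α → β') (γ : α → List β') (κ'' : β → β') (γ'' : β → List β')
    (hκ : ∀ a, κ'' (f a) = κ a) (hγ : ∀ a, γ'' (f a) = γ a) :
    ∀ (d : ℕ) (t : RT α), t.depth ≤ d → Coh κ γ t → Coh κ'' γ'' (rmap f t) := by
  intro d
  induction d with
  | zero => intro t ht; have := one_le_depth t; omega
  | succ d ih =>
    intro t ht hcoh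
    cases t with
    | node a ts =>
      cases hcoh with
      | node _ _ hch hcoh' =>
        rw [rmap_node]
        refine Coh.node _ _ ?_ ?_
        · intro t' ht'
          obtain ⟨t'', ht'', rfl⟩ := List.mem_map.1 ht'
          rw [lab_rmap, hγ, hκ, hγ]
          exact hch t'' ht''
        · intro t' ht'
          obtain ⟨t'', ht'', rfl⟩ := List.mem_map.1 ht'
          have := depth_lt_of_mem (a := a) ht''
          exact ih t'' (by omega) (hcoh' t'' ht'')

lemma foldr_max_le (m : ℕ) : ∀ (l : List ℕ), (∀ x ∈ l, x ≤ m) → l.foldr max 0 ≤ m := by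
  intro l
  induction l with
  | nil => intro _; simp
  | cons x l ih =>
    intro h
    simp only [List.foldr_cons, max_le_iff]
    exact ⟨h x (List.mem_cons_self), ih (fun y hy => h y (List.mem_cons_of_mem _ hy))⟩

lemma depth_le_of_coh {V : Type} (n : ℕ) :
    ∀ (d : ℕ) (t : RT (V × List V)), t.depth ≤ d →
    Coh Prod.fst Prod.snd t → (∀ p ∈ t.labels, p.2.length ≤ n) →
    t.depth + (t.lab).2.length ≤ n + 1 := by
  intro d
  induction d with
  | zero => intro t ht; have := one_le_depth t; omega
  | succ d ih =>
    intro t ht hcoh hlen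
    cases t with
    | node a ts =>
      cases hcoh with
      | node _ _ hch hcoh' =>
        rw [depth_node]
        have hroot : a.2.length ≤ n := hlen a (mem_labels_node.2 (Or.inl rfl))
        have hbound : ∀ x ∈ ts.map depth, x ≤ n - a.2.length := by
          intro x hx
          obtain ⟨t', ht', rfl⟩ := List.mem_map.1 hx
          have hd := depth_lt_of_mem (a := a) ht'
          have hih := ih t' (by omega) (hcoh' t' ht')
            (fun p hp => hlen p (mem_labels_node.2 (Or.inr ⟨t', ht', hp⟩)))
          rw [hch t' ht'] at hih
          simp only [List.length_cons] at hih
          omega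
        have := foldr_max_le (n - a.2.length) (ts.map depth) hbound
        simp only [lab]
        omega

end RT

section Walks
variable {V : Type} (G : SimpleGraph V)

lemma walk_of_chain : ∀ (l : List V) (x : V), (x :: l).Chain' G.Adj →
    ∃ (b : V) (p : G.Walk x b), p.support = x :: l := by
  intro l
  induction l with
  | nil => intro x _; exact ⟨x, SimpleGraph.Walk.nil, SimpleGraph.Walk.support_nil⟩
  | cons y l ih =>
    intro x hch
    replace hch := List.isChain_cons_cons.1 hch
    obtain ⟨b, p, hp⟩ := ih y hch.2
    exact ⟨b, SimpleGraph.Walk.cons hch.1 p, by rw [SimpleGraph.Walk.support_cons, hp]⟩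

lemma chain_length_le (n : ℕ)
    (hpath : ∀ u v : V, ∀ p : G.Walk u v, p.IsPath → p.length ≤ n)
    (l : List V) (x : V) (hch : (x :: l).Chain' G.Adj) (hnd : (x :: l).Nodup) :
    l.length ≤ n := by
  obtain ⟨b, p, hp⟩ := walk_of_chain G l x hch
  have hlen : p.length + 1 = l.length + 1 := by
    rw [← SimpleGraph.Walk.length_support, hp, List.length_cons]
  have : p.IsPath := by
    rw [SimpleGraph.Walk.isPath_def, hp]
    exact hnd
  have := hpath x b p this
  omega

end Walks

section Decode
variable {α : Type u} {L' : Type w} {β : Type v} [DecidableEq β]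
variable (κ : α → β) (γ : α → List β) (ℓ : α → L')

def FK (ts : List (RT α)) : List β := (ts.map (RT.keys κ)).flatten

lemma mem_FK {ts : List (RT α)} {x : β} : x ∈ FK κ ts ↔ ∃ t ∈ ts, x ∈ RT.keys κ t := by
  simp [FK, List.mem_flatten]

lemma FK_cons {t : RT α} {ts : List (RT α)} : FK κ (t :: ts) = RT.keys κ t ++ FK κ ts := by
  simp [FK]

lemma decode : ∀ (d : ℕ) (ts us : List (RT α)),
    List.SublistForall₂ (RT.Emb (fun x y => ℓ x = ℓ y)) ts us →
    ∀ (c c' : List β) (g : β → β),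
    (∀ t ∈ ts, t.depth ≤ d) →
    (∀ t ∈ ts, RT.Coh κ γ t) → (∀ u ∈ us, RT.Coh κ γ u) →
    (∀ t ∈ ts, γ t.lab = c) → (∀ u ∈ us, γ u.lab = c') →
    (FK κ ts).Nodup → (FK κ us).Nodup →
    (∀ x ∈ c, x ∉ FK κ ts) → (∀ x ∈ c', x ∉ FK κ us) →
    c.map g = c' →
    ∃ g' : β → β,
      (∀ x, x ∉ FK κ ts → g' x = g x) ∧
      (∀ x ∈ FK κ ts, g' x ∈ FK κ us) ∧
      (∀ x ∈ FK κ ts, ∀ y ∈ FK κ ts, g' x = g' y → x = y) ∧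
      (∀ t ∈ ts, ∀ p ∈ RT.labels t, ∃ u ∈ us, ∃ q ∈ RT.labels u,
        κ q = g' (κ p) ∧ γ q = (γ p).map g' ∧ ℓ q = ℓ p) := by
  intro d
  induction d with
  | zero =>
    intro ts us hsub c c' g hdep hcoh1 hcoh2 hch1 hch2 hnd1 hnd2 hdisj1 hdisj2 hg
    cases ts with
    | nil =>
      refine ⟨g, fun x _ => rfl, ?_, ?_, ?_⟩
      · intro x hx; simp [FK] at hx
      · intro x hx; simp [FK] at hx
      · intro t ht; simp at ht
    | cons t ts' =>
      exfalso
      have := RT.one_le_depth t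
      have := hdep t (List.mem_cons_self)
      omega
  | succ d ihd =>
    intro ts us hsub
    induction hsub with
    | nil =>
      intro c c' g hdep hcoh1 hcoh2 hch1 hch2 hnd1 hnd2 hdisj1 hdisj2 hg
      refine ⟨g, fun x _ => rfl, ?_, ?_, ?_⟩
      · intro x hx; simp [FK] at hx
      · intro x hx; simp [FK] at hx
      · intro t ht; simp at ht
    | @cons t u ts' us' hE hsub' ihs =>
      intro c c' g hdep hcoh1 hcoh2 hch1 hch2 hnd1 hnd2 hdisj1 hdisj2 hg
      cases t with
      | node a tsc =>
      cases u with
      | node b usc =>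
      cases hE with
      | node hr hsubc =>
      -- basic facts
      have hct : γ a = c := hch1 _ (List.mem_cons_self)
      have hcu : γ b = c' := hch2 _ (List.mem_cons_self)
      have hkt : RT.keys κ (RT.node a tsc) = κ a :: FK κ tsc := by
        rw [RT.keys_node]; rfl
      have hku : RT.keys κ (RT.node b usc) = κ b :: FK κ usc := by
        rw [RT.keys_node]; rfl
      rw [FK_cons, hkt] at hnd1 hdisj1
      rw [FK_cons, hku] at hnd2 hdisj2
      -- decompose nodups
      have hnd1' := hnd1
      rw [List.cons_append, List.nodup_cons, List.nodup_append] at hnd1'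
      obtain ⟨hka, hndtsc, hndts', hdisjt⟩ := hnd1'
      have hka1 : κ a ∉ FK κ tsc := fun h => hka (List.mem_append.2 (Or.inl h))
      have hka2 : κ a ∉ FK κ ts' := fun h => hka (List.mem_append.2 (Or.inr h))
      have hnd2' := hnd2
      rw [List.cons_append, List.nodup_cons, List.nodup_append] at hnd2'
      obtain ⟨hkb, hndusc, hndus', hdisju⟩ := hnd2'
      have hkb1 : κ b ∉ FK κ usc := fun h => hkb (List.mem_append.2 (Or.inl h))
      have hkb2 : κ b ∉ FK κ us' := fun h => hkb (List.mem_append.2 (Or.inr h))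
      -- c is disjoint from everything on the left
      have hcka : κ a ∉ c := fun h => hdisj1 (κ a) h (List.mem_cons_self)
      have hctsc : ∀ x ∈ c, x ∉ FK κ tsc := fun x hx h =>
        hdisj1 x hx (List.mem_cons_of_mem _ (List.mem_append.2 (Or.inl h)))
      have hcts' : ∀ x ∈ c, x ∉ FK κ ts' := fun x hx h =>
        hdisj1 x hx (List.mem_cons_of_mem _ (List.mem_append.2 (Or.inr h)))
      have hckb : κ b ∉ c' := fun h => hdisj2 (κ b) h (List.mem_cons_self)
      have hcusc : ∀ x ∈ c', x ∉ FK κ usc := fun x hx h =>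
        hdisj2 x hx (List.mem_cons_of_mem _ (List.mem_append.2 (Or.inl h)))
      have hcus' : ∀ x ∈ c', x ∉ FK κ us' := fun x hx h =>
        hdisj2 x hx (List.mem_cons_of_mem _ (List.mem_append.2 (Or.inr h)))
      -- invert coherence of the head trees
      have hcoht := hcoh1 _ (List.mem_cons_self)
      have hcohu := hcoh2 _ (List.mem_cons_self)
      cases hcoht with
      | node _ _ hchn1 hcohn1 =>
      cases hcohu with
      | node _ _ hchn2 hcohn2 =>
      -- first: recursive call on the children
      set g₁ : β → β := Function.update g (κ a) (κ b) with hg₁def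
      have hg₁a : g₁ (κ a) = κ b := Function.update_self _ _ _
      have hg₁ne : ∀ x, x ≠ κ a → g₁ x = g x := fun x hx => Function.update_of_ne hx _ _
      obtain ⟨g₂, hg2off, hg2mem, hg2inj, hg2lab⟩ :=
        ihd tsc usc hsubc (κ a :: c) (κ b :: c') g₁
          (by
            intro tc htc
            have h1 := hdep _ (List.mem_cons_self)
            have h2 := RT.depth_lt_of_mem (a := a) htc
            omega)
          hcohn1 hcohn2
          (fun tc htc => by rw [hchn1 tc htc, hct])
          (fun uc huc => by rw [hchn2 uc huc, hcu])
          hndtsc hndusc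
          (by
            intro x hx
            rcases List.mem_cons.1 hx with rfl | hx
            · exact hka1
            · exact hctsc x hx)
          (by
            intro x hx
            rcases List.mem_cons.1 hx with rfl | hx
            · exact hkb1
            · exact hcusc x hx)
          (by
            rw [List.map_cons, hg₁a]
            congr 1
            rw [← hg]
            exact List.map_congr_left (fun x hx => hg₁ne x (fun h => hcka (h ▸ hx))))
      -- second: recursive call on the remaining forest
      obtain ⟨g₃, hg3off, hg3mem, hg3inj, hg3lab⟩ :=
        ihs c c' g₂
          (fun t ht => hdep t (List.mem_cons_of_mem _ ht))
          (fun t ht => hcoh1 t (List.mem_cons_of_mem _ ht))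
          (fun u hu => hcoh2 u (List.mem_cons_of_mem _ hu))
          (fun t ht => hch1 t (List.mem_cons_of_mem _ ht))
          (fun u hu => hch2 u (List.mem_cons_of_mem _ hu))
          hndts' hndus' hcts' hcus'
          (by
            rw [← hg]
            refine List.map_congr_left (fun x hx => ?_)
            rw [hg2off x (hctsc x hx), hg₁ne x (fun h => hcka (h ▸ hx))])
      -- evaluation facts
      have e2 : ∀ x ∈ FK κ tsc, g₃ x = g₂ x := fun x hx =>
        hg3off x (fun h => hdisjt x hx x h rfl)
      have e1 : g₃ (κ a) = κ b := by
        rw [hg3off (κ a) hka2, hg2off (κ a) hka1, hg₁a]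
      have e3 : ∀ x ∈ c, g₃ x = g x := fun x hx => by
        rw [hg3off x (hcts' x hx), hg2off x (hctsc x hx), hg₁ne x (fun h => hcka (h ▸ hx))]
      -- image facts
      have i2 : ∀ x ∈ FK κ tsc, g₃ x ∈ FK κ usc := fun x hx => by
        rw [e2 x hx]; exact hg2mem x hx
      refine ⟨g₃, ?_, ?_, ?_, ?_⟩
      · -- agreement off new keys
        intro x hx
        rw [FK_cons, hkt] at hx
        simp only [List.cons_append, List.mem_cons, List.mem_append] at hx
        push_neg at hx
        obtain ⟨hx1, hx2, hx3⟩ := hx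
        rw [hg3off x hx3, hg2off x hx2, hg₁ne x hx1]
      · -- mapping into keys of us
        intro x hx
        rw [FK_cons, hkt] at hx
        rw [FK_cons, hku]
        simp only [List.cons_append, List.mem_cons, List.mem_append] at hx ⊢
        rcases hx with rfl | hx | hx
        · exact Or.inl e1
        · exact Or.inr (Or.inl (i2 x hx))
        · exact Or.inr (Or.inr (hg3mem x hx))
      · -- injectivity
        intro x hx y hy hxy
        rw [FK_cons, hkt] at hx hy
        simp only [List.cons_append, List.mem_cons, List.mem_append] at hx hy
        rcases hx with rfl | hx | hx <;> rcases hy with rfl | hy | hy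
        · rfl
        · exfalso; have h2 := i2 y hy; rw [← hxy, e1] at h2; exact hkb1 h2
        · exfalso; have h2 := hg3mem y hy; rw [← hxy, e1] at h2; exact hkb2 h2
        · exfalso; have h2 := i2 x hx; rw [hxy, e1] at h2; exact hkb1 h2
        · rw [e2 x hx, e2 y hy] at hxy
          exact hg2inj x hx y hy hxy
        · exfalso
          have h1 : g₃ x ∈ FK κ usc := i2 x hx
          have h2 : g₃ y ∈ FK κ us' := hg3mem y hy
          rw [hxy] at h1
          exact hdisju _ h1 _ h2 rfl
        · exfalso
          have h1 : g₃ x ∈ FK κ us' := hg3mem x hx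
          rw [hxy, e1] at h1
          exact hkb2 h1
        · exfalso
          have h1 : g₃ x ∈ FK κ us' := hg3mem x hx
          have h2 : g₃ y ∈ FK κ usc := i2 y hy
          rw [hxy] at h1
          exact hdisju _ h2 _ h1 rfl
        · exact hg3inj x hx y hy hxy
      · -- label correspondence
        intro t ht p hp
        rcases List.mem_cons.1 ht with rfl | ht
        · -- p in the head tree
          rcases RT.mem_labels_node.1 hp with rfl | ⟨tc, htc, hpc⟩
          · -- p is the root a
            refine ⟨RT.node b usc, List.mem_cons_self,
              b, RT.mem_labels_node.2 (Or.inl rfl), e1.symm, ?_, hr.symm⟩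
            rw [hcu, hct, ← hg]
            exact (List.map_congr_left (fun x hx => e3 x hx)).symm
          · -- p is in a child subtree
            obtain ⟨uc, huc, q, hq, hκq, hγq, hℓq⟩ := hg2lab tc htc p hpc
            refine ⟨RT.node b usc, List.mem_cons_self,
              q, RT.mem_labels_node.2 (Or.inr ⟨uc, huc, hq⟩), ?_, ?_, hℓq⟩
            · rw [hκq, e2 (κ p) (mem_FK κ |>.2 ⟨tc, htc, RT.mem_keys_of_mem_labels hpc⟩)]
            · -- rewrite the chain of p using g₃ = g₂ on it
              rw [hγq]
              refine List.map_congr_left (fun x hx => ?_)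
              obtain ⟨pre, hpre, hprem⟩ := RT.chain_decomp' (hcohn1 tc htc) hpc
              rw [hpre, hchn1 tc htc, hct] at hx
              rcases List.mem_append.1 hx with hx | hx
              · exact (e2 x (mem_FK κ |>.2 ⟨tc, htc, hprem x hx⟩)).symm
              · rcases List.mem_cons.1 hx with rfl | hx
                · rw [hg2off (κ a) hka1, hg₁a, e1]
                · rw [hg3off x (hcts' x hx)]
        · -- p in the remaining forest
          obtain ⟨u', hu', q, hq, h1, h2, h3⟩ := hg3lab t ht p hp
          exact ⟨u', List.mem_cons_of_mem _ hu', q, hq, h1, h2, h3⟩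
    | @cons_right u ts us' hsub' ihs =>
      intro c c' g hdep hcoh1 hcoh2 hch1 hch2 hnd1 hnd2 hdisj1 hdisj2 hg
      rw [FK_cons] at hnd2 hdisj2
      rw [List.nodup_append] at hnd2
      obtain ⟨g', h1, h2, h3, h4⟩ :=
        ihs c c' g hdep hcoh1
          (fun u hu => hcoh2 u (List.mem_cons_of_mem _ hu))
          hch1 (fun u hu => hch2 u (List.mem_cons_of_mem _ hu))
          hnd1 hnd2.2.1 hdisj1
          (fun x hx h => hdisj2 x hx (List.mem_append.2 (Or.inr h)))
          hg
      refine ⟨g', h1, ?_, h3, ?_⟩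
      · intro x hx
        rw [FK_cons]
        exact List.mem_append.2 (Or.inr (h2 x hx))
      · intro t ht p hp
        obtain ⟨u', hu', hrest⟩ := h4 t ht p hp
        exact ⟨u', List.mem_cons_of_mem _ hu', hrest⟩

end Decode

namespace RT
variable {α : Type u} {β : Type v} {β' : Type w}

lemma coh_comp (κ : α → β) (γ : α → List β) (π : β → β') :
    ∀ (d : ℕ) (t : RT α), t.depth ≤ d → Coh κ γ t →
      Coh (fun a => π (κ a)) (fun a => (γ a).map π) t := by
  intro d
  induction d with
  | zero => intro t ht; have := one_le_depth t; omega
  | succ d ih =>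
    intro t ht hcoh
    cases t with
    | node a ts =>
      cases hcoh with
      | node _ _ hch hcoh' =>
        refine Coh.node _ _ ?_ ?_
        · intro t' ht'
          rw [hch t' ht', List.map_cons]
        · intro t' ht'
          have := depth_lt_of_mem (a := a) ht'
          exact ih t' (by omega) (hcoh' t' ht')

end RT

lemma pwo_of_finite_image {α : Type u} {L' : Type w} (ℓ : α → L') {S : Set α} {T : Set L'}
    (hT : T.Finite) (h : ∀ x ∈ S, ℓ x ∈ T) :
    S.PartiallyWellOrderedOn (fun x y => ℓ x = ℓ y) := by
  rw [Set.partiallyWellOrderedOn_iff_exists_lt]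
  intro f hf
  haveI := hT.to_subtype
  obtain ⟨i, j, hij, heq⟩ := Finite.exists_ne_map_eq_of_infinite
    (fun nn : ℕ => (⟨ℓ (f nn), h (f nn) (hf nn)⟩ : T))
  have heq' : ℓ (f i) = ℓ (f j) := congrArg Subtype.val heq
  rcases lt_or_gt_of_ne hij with hlt | hgt
  · exact ⟨i, j, hlt, heq'⟩
  · exact ⟨j, i, hgt, heq'.symm⟩

lemma finite_lists {X : Type u} {s : Set X} (hs : s.Finite) :
    ∀ nn : ℕ, {l : List X | l.length ≤ nn ∧ ∀ x ∈ l, x ∈ s}.Finite := by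
  intro nn
  induction nn with
  | zero =>
    refine Set.Finite.subset (Set.finite_singleton []) ?_
    rintro l ⟨hl, -⟩
    simp only [Nat.le_zero, List.length_eq_zero_iff] at hl
    simp [hl]
  | succ nn ih =>
    refine Set.Finite.subset (Set.Finite.insert []
      ((hs.prod ih).image (fun p => p.1 :: p.2))) ?_
    rintro l ⟨hl, hmem⟩
    cases l with
    | nil => exact Set.mem_insert _ _
    | cons x l' =>
      refine Set.mem_insert_of_mem _ ?_
      refine ⟨(x, l'), ⟨hmem x (List.mem_cons_self), ?_, ?_⟩, rfl⟩
      · simpa using hl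
      · exact fun y hy => hmem y (List.mem_cons_of_mem _ hy)

lemma finite_bounded_funs {Λ : Type*} [Fintype Λ] (k : ℕ) :
    {f : Λ → ℕ | ∀ l, f l ≤ k}.Finite := by
  classical
  have : {f : Λ → ℕ | ∀ l, f l ≤ k} ⊆
      (fun (g : Λ → Fin (k+1)) => (fun l => (g l : ℕ))) '' Set.univ := by
    intro f hf
    exact ⟨fun l => ⟨f l, Nat.lt_succ_of_le (hf l)⟩, Set.mem_univ _, rfl⟩
  exact Set.Finite.subset (Set.finite_univ.image _) this


def pdat {Λ : Type*} {mm : ℕ} (E : Fin mm → Fin mm → Λ → ℕ) (v b : Fin mm) :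
    (Λ → ℕ) × (Λ → ℕ) :=
  (fun l => E v b l, fun l => E b v l)

def phi {Λ : Type*} {mm : ℕ} (E : Fin mm → Fin mm → Λ → ℕ) (p : Fin mm × List (Fin mm)) :
    (ℕ × List ℕ) × ((Λ → ℕ) × List ((Λ → ℕ) × (Λ → ℕ))) :=
  ((p.1.val, p.2.map Fin.val), ((fun l => E p.1 p.1 l), p.2.map (pdat E p.1)))

lemma onegraph {Λ : Type*} (n : ℕ) {mm : ℕ} (E : Fin mm → Fin mm → Λ → ℕ)
    (hpath : ∀ u v : Fin mm, ∀ p : (underlying E).Walk u v, p.IsPath → p.length ≤ n) :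
    ∃ F : List (RT (Fin mm × List (Fin mm))),
      (∀ t ∈ F, (RT.lab t).2 = ([] : List (Fin mm))) ∧
      (∀ t ∈ F, RT.Coh Prod.fst Prod.snd t) ∧
      (F.map (RT.keys Prod.fst)).flatten.Nodup ∧
      (∀ u : Fin mm, u ∈ (F.map (RT.keys Prod.fst)).flatten) ∧
      (∀ t ∈ F, ∀ p ∈ RT.labels t, (p.1 :: p.2).Nodup) ∧
      (∀ t ∈ F, ∀ p ∈ RT.labels t, p.2.length ≤ n) ∧
      (∀ t ∈ F, ∀ t' ∈ F, ∀ p ∈ RT.labels t, ∀ q ∈ RT.labels t',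
          p.1 ∉ q.1 :: q.2 → q.1 ∉ p.1 :: p.2 → ¬ (underlying E).Adj p.1 q.1) ∧
      (∀ t ∈ F, t.depth ≤ n + 1) := by
  classical
  obtain ⟨F, h1, h2, h3, h4, h5, h6⟩ :=
    buildForest (underlying E) (Finset.univ.card) Finset.univ le_rfl
  have hcov : ∀ u : Fin mm, u ∈ (F.map (RT.keys Prod.fst)).flatten :=
    fun u => (h4 u).2 (Finset.mem_univ u)
  have hlen : ∀ t ∈ F, ∀ p ∈ RT.labels t, p.2.length ≤ n := by
    intro t ht p hp
    obtain ⟨hnd, hch⟩ := h5 t ht p hp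
    exact chain_length_le (underlying E) n hpath p.2 p.1 hch hnd
  refine ⟨F, h1, h2, h3, hcov, fun t ht p hp => (h5 t ht p hp).1, hlen, h6, ?_⟩
  intro t ht
  have := RT.depth_le_of_coh n (RT.depth t) t le_rfl (h2 t ht) (hlen t ht)
  rw [h1 t ht] at this
  simpa using this

lemma map_getElem_eq {A B C : Type*} (f : A → C) (g : B → C) {l₁ : List A} {l₂ : List B}
    (h : l₁.map f = l₂.map g) (idx : ℕ) (h1 : idx < l₁.length) (h2 : idx < l₂.length) :
    f (l₁[idx]) = g (l₂[idx]) := by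
  have h0 := congrArg (fun L => L[idx]?) h
  simp only [List.getElem?_map, List.getElem?_eq_getElem h1, List.getElem?_eq_getElem h2,
    Option.map_some] at h0
  exact Option.some.inj h0

lemma map_len_eq {A B C : Type*} (f : A → C) (g : B → C) {l₁ : List A} {l₂ : List B}
    (h : l₁.map f = l₂.map g) : l₁.length = l₂.length := by
  have := congrArg List.length h
  simpa using this


/-- the induced subgraph ordering is a wqo on finite directed edge-labelled
multigraphs over a finite label set whose undirected paths have length at most `n` and
whose edge multiplicities are bounded by `k`. -/
theorem stmt_11 {Λ : Type*} [Fintype Λ] (n k : ℕ)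
    (m : ℕ → ℕ) (E : ∀ i : ℕ, Fin (m i) → Fin (m i) → Λ → ℕ)
    (hpath : ∀ i : ℕ, ∀ u v : Fin (m i), ∀ p : (underlying (E i)).Walk u v,
      p.IsPath → p.length ≤ n)
    (hmult : ∀ (i : ℕ) (u v : Fin (m i)) (l : Λ), E i u v l ≤ k) :
    ∃ i j : ℕ, i < j ∧
      ∃ f : Fin (m i) → Fin (m j), Function.Injective f ∧
        ∀ (u v : Fin (m i)) (l : Λ), E i u v l = E j (f u) (f v) l := by
  classical
  have hF := fun i : ℕ => onegraph n (E i) (hpath i)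
  choose F hlab hcoh hnd hcov hndchain hlen hsep hdep using hF
  -- the finite label set
  set Lset : Set ((Λ → ℕ) × List ((Λ → ℕ) × (Λ → ℕ))) :=
    {p | (∀ l, p.1 l ≤ k) ∧ p.2.length ≤ n ∧
      ∀ q ∈ p.2, (∀ l, q.1 l ≤ k) ∧ (∀ l, q.2 l ≤ k)} with hLset
  have hLfin : Lset.Finite := by
    have hB := finite_bounded_funs (Λ := Λ) k
    have hP : ({f : Λ → ℕ | ∀ l, f l ≤ k} ×ˢ {f : Λ → ℕ | ∀ l, f l ≤ k}).Finite := hB.prod hB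
    have hL := finite_lists hP n
    refine Set.Finite.subset (hB.prod hL) ?_
    rintro ⟨f₀, l₀⟩ ⟨h1, h2, h3⟩
    exact ⟨h1, h2, fun q hq => ⟨(h3 q hq).1, (h3 q hq).2⟩⟩
  -- relabelled forests
  have hbase : {x : (ℕ × List ℕ) × ((Λ → ℕ) × List ((Λ → ℕ) × (Λ → ℕ))) | x.2 ∈ Lset}.PartiallyWellOrderedOn
      (fun x y => x.2 = y.2) :=
    pwo_of_finite_image
      (fun x : (ℕ × List ℕ) × ((Λ → ℕ) × List ((Λ → ℕ) × (Λ → ℕ))) => x.2) hLfin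
      (fun x hx => hx)
  haveI : IsRefl ((ℕ × List ℕ) × ((Λ → ℕ) × List ((Λ → ℕ) × (Λ → ℕ))))
      (fun x y => x.2 = y.2) := ⟨fun _ => rfl⟩
  haveI : IsTrans ((ℕ × List ℕ) × ((Λ → ℕ) × List ((Λ → ℕ) × (Λ → ℕ))))
      (fun x y => x.2 = y.2) := ⟨fun _ _ _ h1 h2 => h1.trans h2⟩
  haveI : IsPreorder ((ℕ × List ℕ) × ((Λ → ℕ) × List ((Λ → ℕ) × (Λ → ℕ))))
      (fun x y => x.2 = y.2) := { refl := fun _ => rfl, trans := fun _ _ _ h1 h2 => h1.trans h2 }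
  have htree := RT.pwo_trees hbase (n + 1)
  have hHig := Set.PartiallyWellOrderedOn.partiallyWellOrderedOn_sublistForall₂ _ htree
  -- membership of the relabelled forests
  have hFc : ∀ a : ℕ, ∀ t' ∈ (F a).map (RT.rmap (phi (E a))),
      t' ∈ {t | t.depth ≤ n + 1 ∧ ∀ x ∈ t.labels,
        x ∈ {x : (ℕ × List ℕ) × ((Λ → ℕ) × List ((Λ → ℕ) × (Λ → ℕ))) | x.2 ∈ Lset}} := by
    intro a t' ht'
    obtain ⟨t₀, ht₀, rfl⟩ := List.mem_map.1 ht'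
    constructor
    · rw [RT.depth_rmap']
      exact hdep a t₀ ht₀
    · intro x hx
      rw [RT.labels_rmap'] at hx
      obtain ⟨p, hp, rfl⟩ := List.mem_map.1 hx
      refine ⟨fun l => hmult a p.1 p.1 l, ?_, ?_⟩
      · simpa [phi] using hlen a t₀ ht₀ p hp
      · intro q hq
        simp only [phi, List.mem_map] at hq
        obtain ⟨b, hb, rfl⟩ := hq
        exact ⟨fun l => hmult a p.1 b l, fun l => hmult a b p.1 l⟩
  obtain ⟨i, j, hij, hsub⟩ := Set.partiallyWellOrderedOn_iff_exists_lt.1 hHig (fun a => (F a).map (RT.rmap (phi (E a)))) hFc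
  refine ⟨i, j, hij, ?_⟩
  -- facts about the relabelled forests for decode
  have hdepN : ∀ a : ℕ, ∀ t' ∈ (F a).map (RT.rmap (phi (E a))), t'.depth ≤ n + 1 := by
    intro a t' ht'
    obtain ⟨t₀, ht₀, rfl⟩ := List.mem_map.1 ht'
    rw [RT.depth_rmap']
    exact hdep a t₀ ht₀
  have hcohN : ∀ a : ℕ, ∀ t' ∈ (F a).map (RT.rmap (phi (E a))),
      RT.Coh (fun x => x.1.1) (fun x => x.1.2) t' := by
    intro a t' ht'
    obtain ⟨t₀, ht₀, rfl⟩ := List.mem_map.1 ht'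
    have h1 := RT.coh_comp Prod.fst Prod.snd Fin.val t₀.depth t₀ le_rfl (hcoh a t₀ ht₀)
    exact RT.coh_rmap (phi (E a)) (fun p => (p.1 : ℕ)) (fun p => p.2.map Fin.val)
      (fun x => x.1.1) (fun x => x.1.2) (fun p => rfl) (fun p => rfl) t₀.depth t₀ le_rfl h1
  have hchainN : ∀ a : ℕ, ∀ t' ∈ (F a).map (RT.rmap (phi (E a))),
      (fun x => x.1.2) (RT.lab t') = ([] : List ℕ) := by
    intro a t' ht'
    obtain ⟨t₀, ht₀, rfl⟩ := List.mem_map.1 ht'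
    rw [RT.lab_rmap]
    show ((RT.lab t₀).2).map Fin.val = []
    rw [hlab a t₀ ht₀]
    rfl
  have hFKeq : ∀ a : ℕ, FK (fun x => x.1.1) ((F a).map (RT.rmap (phi (E a)))) =
      ((F a).map (RT.keys Prod.fst)).flatten.map Fin.val := by
    intro a
    rw [FK, List.map_map, List.map_flatten, List.map_map]
    congr 1
    apply List.map_congr_left
    intro t₀ _
    show RT.keys (fun x => x.1.1) (RT.rmap (phi (E a)) t₀) = (RT.keys Prod.fst t₀).map Fin.val
    rw [RT.keys_rmap (phi (E a)) (fun p => (p.1 : ℕ)) (fun x => x.1.1) (fun p => rfl)]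
    rw [RT.keys, RT.keys, List.map_map]
    rfl
  have hFKnd : ∀ a : ℕ, (FK (fun x => x.1.1) ((F a).map (RT.rmap (phi (E a))))).Nodup := by
    intro a
    rw [hFKeq]
    exact (hnd a).map Fin.val_injective
  have hvalFK : ∀ a : ℕ, ∀ w : Fin (m a),
      (w : ℕ) ∈ FK (fun x => x.1.1) ((F a).map (RT.rmap (phi (E a)))) := by
    intro a w
    rw [hFKeq]
    exact List.mem_map_of_mem (hcov a w)
  obtain ⟨g', hgoff, hgmem, hginj, hglab⟩ :=
    decode (fun x => x.1.1) (fun x => x.1.2) (fun x => x.2) (n + 1)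
      ((F i).map (RT.rmap (phi (E i)))) ((F j).map (RT.rmap (phi (E j)))) hsub
      [] [] id (hdepN i) (hcohN i) (hcohN j) (hchainN i) (hchainN j)
      (hFKnd i) (hFKnd j) (by simp) (by simp) rfl
  -- the vertex map
  have hb : ∀ v : Fin (m i), g' (v : ℕ) < m j := by
    intro v
    have h1 := hgmem (v : ℕ) (hvalFK i v)
    rw [hFKeq j] at h1
    obtain ⟨w, -, hw⟩ := List.mem_map.1 h1
    rw [← hw]
    exact w.isLt
  refine ⟨fun v => ⟨g' (v : ℕ), hb v⟩, ?_, ?_⟩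
  · intro v v' h
    have h1 : g' (v : ℕ) = g' (v' : ℕ) := congrArg Fin.val h
    exact Fin.val_injective (hginj _ (hvalFK i v) _ (hvalFK i v') h1)
  -- edge counts
  intro u v l
  show E i u v l = E j ⟨g' (u : ℕ), hb u⟩ ⟨g' (v : ℕ), hb v⟩ l
  -- entries
  have hentry : ∀ a : ℕ, ∀ w : Fin (m a), ∃ t ∈ F a, ∃ p ∈ RT.labels t, p.1 = w := by
    intro a w
    have h1 := hcov a w
    rw [List.mem_flatten] at h1
    obtain ⟨ks, hks, hw⟩ := h1
    obtain ⟨t, ht, rfl⟩ := List.mem_map.1 hks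
    obtain ⟨p, hp, hpw⟩ := RT.mem_keys_iff.1 hw
    exact ⟨t, ht, p, hp, hpw⟩
  have hmain : ∀ w : Fin (m i), ∀ t ∈ F i, ∀ p ∈ RT.labels t, p.1 = w →
      ∃ T ∈ F j, ∃ q ∈ RT.labels T,
        (q.1 : ℕ) = g' (w : ℕ) ∧
        q.2.map Fin.val = (p.2.map Fin.val).map g' ∧
        ((fun l => E j q.1 q.1 l), q.2.map (pdat (E j) q.1)) =
          ((fun l => E i w w l), p.2.map (pdat (E i) w)) := by
    intro w t ht p hp hpw
    have h1 : RT.rmap (phi (E i)) t ∈ (F i).map (RT.rmap (phi (E i))) :=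
      List.mem_map_of_mem ht
    have h2 : phi (E i) p ∈ RT.labels (RT.rmap (phi (E i)) t) := by
      rw [RT.labels_rmap']
      exact List.mem_map_of_mem hp
    obtain ⟨U, hU, q', hq', hκq, hγq, hℓq⟩ := hglab _ h1 _ h2
    obtain ⟨TU, hTU, rfl⟩ := List.mem_map.1 hU
    rw [RT.labels_rmap'] at hq'
    obtain ⟨q, hq, rfl⟩ := List.mem_map.1 hq'
    subst hpw
    exact ⟨TU, hTU, q, hq, hκq, hγq, hℓq⟩
  obtain ⟨tu, htu, pu, hpu, hpu1⟩ := hentry i u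
  obtain ⟨tv, htv, pv, hpv, hpv1⟩ := hentry i v
  obtain ⟨Tu, hTu, qu, hqu, hqu1, hqu2, hqu3⟩ := hmain u tu htu pu hpu hpu1
  obtain ⟨Tv, hTv, qv, hqv, hqv1, hqv2, hqv3⟩ := hmain v tv htv pv hpv hpv1
  have hfu : qu.1 = (⟨g' (u : ℕ), hb u⟩ : Fin (m j)) := Fin.val_injective hqu1
  have hfv : qv.1 = (⟨g' (v : ℕ), hb v⟩ : Fin (m j)) := Fin.val_injective hqv1
  by_cases huv : u = v
  · subst huv
    have h1 := congrFun (congrArg Prod.fst hqu3) l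
    simp only at h1
    rw [← hfu]
    exact h1.symm
  by_cases hvcu : v ∈ pu.2
  · obtain ⟨idx, hidx, hvq⟩ := List.getElem_of_mem hvcu
    have hlenq : qu.2.length = pu.2.length := by
      have := map_len_eq Fin.val (fun x => g' (Fin.val x)) (by rw [hqu2, List.map_map]; rfl)
      exact this
    have hidx' : idx < qu.2.length := by omega
    have hval : (qu.2[idx]'hidx').val = g' ((pu.2[idx]'hidx).val) := by
      have := map_getElem_eq Fin.val (fun x => g' (Fin.val x))
        (l₁ := qu.2) (l₂ := pu.2) (by rw [hqu2, List.map_map]; rfl) idx hidx' hidx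
      exact this
    have hqv2' : qu.2[idx]'hidx' = (⟨g' (v : ℕ), hb v⟩ : Fin (m j)) := by
      apply Fin.val_injective
      rw [hval, hvq]
    have hpd := map_getElem_eq (pdat (E j) qu.1) (pdat (E i) u)
      (congrArg Prod.snd hqu3) idx hidx' hidx
    rw [hvq] at hpd
    have h1 := congrFun (congrArg Prod.fst hpd) l
    simp only [pdat] at h1
    rw [← hfu, ← hqv2']
    exact h1.symm
  by_cases hucv : u ∈ pv.2
  · obtain ⟨idx, hidx, hvq⟩ := List.getElem_of_mem hucv
    have hlenq : qv.2.length = pv.2.length :=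
      map_len_eq Fin.val (fun x => g' (Fin.val x)) (by rw [hqv2, List.map_map]; rfl)
    have hidx' : idx < qv.2.length := by omega
    have hval : (qv.2[idx]'hidx').val = g' ((pv.2[idx]'hidx).val) :=
      map_getElem_eq Fin.val (fun x => g' (Fin.val x))
        (l₁ := qv.2) (l₂ := pv.2) (by rw [hqv2, List.map_map]; rfl) idx hidx' hidx
    have hqu2' : qv.2[idx]'hidx' = (⟨g' (u : ℕ), hb u⟩ : Fin (m j)) := by
      apply Fin.val_injective
      rw [hval, hvq]
    have hpd := map_getElem_eq (pdat (E j) qv.1) (pdat (E i) v)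
      (congrArg Prod.snd hqv3) idx hidx' hidx
    rw [hvq] at hpd
    have h1 := congrFun (congrArg Prod.snd hpd) l
    simp only [pdat] at h1
    rw [← hfv, ← hqu2']
    exact h1.symm
  -- incomparable case
  · have hnadj : ¬ (underlying (E i)).Adj pu.1 pv.1 := by
      refine hsep i tu htu tv htv pu hpu pv hpv ?_ ?_
      · rw [hpu1, hpv1]
        intro hmem
        rcases List.mem_cons.1 hmem with h | h
        · exact huv h
        · exact hucv h
      · rw [hpu1, hpv1]
        intro hmem
        rcases List.mem_cons.1 hmem with h | h
        · exact huv h.symm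
        · exact hvcu h
    have hEi0 : E i u v l = 0 := by
      by_contra h
      rw [hpu1, hpv1] at hnadj
      exact hnadj ⟨huv, l, Or.inl (Nat.pos_of_ne_zero h)⟩
    -- show the images are incomparable too
    have hfvnot : (⟨g' (v : ℕ), hb v⟩ : Fin (m j)) ∉ qu.2 := by
      intro hmem
      obtain ⟨idx, hidx, hvq⟩ := List.getElem_of_mem hmem
      have hlenq : qu.2.length = pu.2.length :=
        map_len_eq Fin.val (fun x => g' (Fin.val x)) (by rw [hqu2, List.map_map]; rfl)
      have hidx2 : idx < pu.2.length := by omega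
      have hval : (qu.2[idx]'hidx).val = g' ((pu.2[idx]'hidx2).val) :=
        map_getElem_eq Fin.val (fun x => g' (Fin.val x))
          (l₁ := qu.2) (l₂ := pu.2) (by rw [hqu2, List.map_map]; rfl) idx hidx hidx2
      rw [hvq] at hval
      have : (v : ℕ) = ((pu.2[idx]'hidx2) : ℕ) :=
        hginj _ (hvalFK i v) _ (hvalFK i _) hval
      have hv' : v = pu.2[idx]'hidx2 := Fin.val_injective this
      exact hvcu (hv' ▸ List.getElem_mem hidx2)
    have hfunot : (⟨g' (u : ℕ), hb u⟩ : Fin (m j)) ∉ qv.2 := by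
      intro hmem
      obtain ⟨idx, hidx, hvq⟩ := List.getElem_of_mem hmem
      have hlenq : qv.2.length = pv.2.length :=
        map_len_eq Fin.val (fun x => g' (Fin.val x)) (by rw [hqv2, List.map_map]; rfl)
      have hidx2 : idx < pv.2.length := by omega
      have hval : (qv.2[idx]'hidx).val = g' ((pv.2[idx]'hidx2).val) :=
        map_getElem_eq Fin.val (fun x => g' (Fin.val x))
          (l₁ := qv.2) (l₂ := pv.2) (by rw [hqv2, List.map_map]; rfl) idx hidx hidx2
      rw [hvq] at hval
      have : (u : ℕ) = ((pv.2[idx]'hidx2) : ℕ) :=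
        hginj _ (hvalFK i u) _ (hvalFK i _) hval
      have hu' : u = pv.2[idx]'hidx2 := Fin.val_injective this
      exact hucv (hu' ▸ List.getElem_mem hidx2)
    have hfne : (⟨g' (u : ℕ), hb u⟩ : Fin (m j)) ≠ ⟨g' (v : ℕ), hb v⟩ := by
      intro h
      have h1 : g' (u : ℕ) = g' (v : ℕ) := congrArg Fin.val h
      exact huv (Fin.val_injective (hginj _ (hvalFK i u) _ (hvalFK i v) h1))
    have hnadjj : ¬ (underlying (E j)).Adj qu.1 qv.1 := by
      refine hsep j Tu hTu Tv hTv qu hqu qv hqv ?_ ?_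
      · rw [hfu, hfv]
        intro hmem
        rcases List.mem_cons.1 hmem with h | h
        · exact hfne h
        · exact hfunot h
      · rw [hfu, hfv]
        intro hmem
        rcases List.mem_cons.1 hmem with h | h
        · exact hfne h.symm
        · exact hfvnot h
    have hEj0 : E j (⟨g' (u : ℕ), hb u⟩ : Fin (m j)) (⟨g' (v : ℕ), hb v⟩ : Fin (m j)) l = 0 := by
      by_contra h
      rw [hfu, hfv] at hnadjj
      exact hnadjj ⟨hfne, l, Or.inl (Nat.pos_of_ne_zero h)⟩
    rw [hEi0, hEj0]
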